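/- Let (G,ψ) be a Γ-gain graph and let H₁, H₂ be connected subgraphs of G such that H₁ ∩ H₂ is connected and has no fixed cut-vertex; set H = H₁ ∪ H₂. If ⟨H₁⟩ ≅ ℤ_p for some prime p and H₁ ∩ H₂ is unbalanced, then ⟨H₁⟩ ≅ ⟨H₁ ∩ H₂⟩ and ⟨H₂⟩ ≅ ⟨H⟩. -/

import Mathlib

open scoped Classical

namespace GR

/-- A finite directed multigraph with edge labels ("gains") in a group `Γ` and a
designated finite set of fixed vertices. -/
structure GainedGraph (V E Γ : Type) where
  tail : E → V
  head : E → V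
  gain : E → Γ
  fixed : Finset V

variable {V E Γ : Type} [DecidableEq V] [DecidableEq E] [Fintype V] [Fintype E] [Group Γ]

/-- A subgraph: a set of vertices and a set of edges whose endpoints lie in the vertex set. -/
structure Subgraph (G : GainedGraph V E Γ) where
  verts : Finset V
  edges : Finset E
  tail_mem : ∀ e ∈ edges, G.tail e ∈ verts
  head_mem : ∀ e ∈ edges, G.head e ∈ verts

namespace Subgraph

variable {G : GainedGraph V E Γ}

instance : Top (Subgraph G) :=
  ⟨⟨Finset.univ, Finset.univ, fun _ _ => Finset.mem_univ _, fun _ _ => Finset.mem_univ _⟩⟩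

instance : LE (Subgraph G) :=
  ⟨fun H K => H.verts ⊆ K.verts ∧ H.edges ⊆ K.edges⟩

def union (H K : Subgraph G) : Subgraph G where
  verts := H.verts ∪ K.verts
  edges := H.edges ∪ K.edges
  tail_mem e he := by
    rcases Finset.mem_union.1 he with h | h
    · exact Finset.mem_union_left _ (H.tail_mem e h)
    · exact Finset.mem_union_right _ (K.tail_mem e h)
  head_mem e he := by
    rcases Finset.mem_union.1 he with h | h
    · exact Finset.mem_union_left _ (H.head_mem e h)
    · exact Finset.mem_union_right _ (K.head_mem e h)

def inter (H K : Subgraph G) : Subgraph G where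
  verts := H.verts ∩ K.verts
  edges := H.edges ∩ K.edges
  tail_mem e he := by
    rcases Finset.mem_inter.1 he with ⟨h1, h2⟩
    exact Finset.mem_inter.2 ⟨H.tail_mem e h1, K.tail_mem e h2⟩
  head_mem e he := by
    rcases Finset.mem_inter.1 he with ⟨h1, h2⟩
    exact Finset.mem_inter.2 ⟨H.head_mem e h1, K.head_mem e h2⟩

/-- Delete a vertex together with all edges incident to it. -/
def deleteVertex (H : Subgraph G) (v : V) : Subgraph G where
  verts := H.verts.erase v
  edges := H.edges.filter fun e => G.tail e ≠ v ∧ G.head e ≠ v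
  tail_mem e he := by
    rcases Finset.mem_filter.1 he with ⟨h1, h2, h3⟩
    exact Finset.mem_erase.2 ⟨h2, H.tail_mem e h1⟩
  head_mem e he := by
    rcases Finset.mem_filter.1 he with ⟨h1, h2, h3⟩
    exact Finset.mem_erase.2 ⟨h3, H.head_mem e h1⟩

/-- Delete an edge. -/
def deleteEdge (H : Subgraph G) (f : E) : Subgraph G where
  verts := H.verts
  edges := H.edges.erase f
  tail_mem e he := H.tail_mem e (Finset.mem_of_mem_erase he)
  head_mem e he := H.head_mem e (Finset.mem_of_mem_erase he)

/-- Add an edge (together with its endpoints). -/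
def addEdge (H : Subgraph G) (f : E) : Subgraph G where
  verts := insert (G.tail f) (insert (G.head f) H.verts)
  edges := insert f H.edges
  tail_mem e he := by
    rcases Finset.mem_insert.1 he with rfl | h
    · exact Finset.mem_insert_self _ _
    · exact Finset.mem_insert_of_mem (Finset.mem_insert_of_mem (H.tail_mem e h))
  head_mem e he := by
    rcases Finset.mem_insert.1 he with rfl | h
    · exact Finset.mem_insert_of_mem (Finset.mem_insert_self _ _)
    · exact Finset.mem_insert_of_mem (Finset.mem_insert_of_mem (H.head_mem e h))

/-- The free vertices of a subgraph. -/
def freeVerts (H : Subgraph G) : Finset V := H.verts \ G.fixed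

/-- The fixed vertices of a subgraph. -/
def fixedVerts (H : Subgraph G) : Finset V := H.verts ∩ G.fixed

end Subgraph

/-- The starting vertex of an oriented traversal of an edge. -/
def stepStart (G : GainedGraph V E Γ) (s : E × Bool) : V :=
  if s.2 then G.tail s.1 else G.head s.1

/-- The ending vertex of an oriented traversal of an edge. -/
def stepEnd (G : GainedGraph V E Γ) (s : E × Bool) : V :=
  if s.2 then G.head s.1 else G.tail s.1

/-- The gain contributed by an oriented traversal of an edge. -/
def stepGain (G : GainedGraph V E Γ) (s : E × Bool) : Γ :=
  if s.2 then G.gain s.1 else (G.gain s.1)⁻¹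

/-- `IsWalk G H L u w` : `L` is a walk in the subgraph `H` from `u` to `w`. -/
def IsWalk (G : GainedGraph V E Γ) (H : Subgraph G) : List (E × Bool) → V → V → Prop
  | [], u, w => u = w ∧ u ∈ H.verts
  | s :: L, u, w => s.1 ∈ H.edges ∧ stepStart G s = u ∧ IsWalk G H L (stepEnd G s) w

/-- The gain of a walk. -/
def walkGain (G : GainedGraph V E Γ) (L : List (E × Bool)) : Γ :=
  (L.map (stepGain G)).prod

/-- The vertices visited by a walk starting at `u`. -/
def walkVerts (G : GainedGraph V E Γ) (u : V) (L : List (E × Bool)) : List V :=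
  u :: L.map (stepEnd G)

/-- `⟨H⟩` : the subgroup of `Γ` generated by the gains of all closed walks in `H`
containing no fixed vertex. -/
def gainGroup (G : GainedGraph V E Γ) (H : Subgraph G) : Subgroup Γ :=
  Subgroup.closure
    {g | ∃ u L, IsWalk G H L u u ∧ (∀ x ∈ walkVerts G u L, x ∉ G.fixed) ∧ walkGain G L = g}

/-- A subgraph is balanced if its gain group is trivial. -/
def Balanced (G : GainedGraph V E Γ) (H : Subgraph G) : Prop := gainGroup G H = ⊥

def Reachable (G : GainedGraph V E Γ) (H : Subgraph G) (u w : V) : Prop :=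
  ∃ L, IsWalk G H L u w

def Connected (G : GainedGraph V E Γ) (H : Subgraph G) : Prop :=
  H.verts.Nonempty ∧ ∀ u ∈ H.verts, ∀ w ∈ H.verts, Reachable G H u w

/-- `v` is a cut-vertex of the subgraph `H`. -/
def IsCutVertex (G : GainedGraph V E Γ) (H : Subgraph G) (v : V) : Prop :=
  v ∈ H.verts ∧ ∃ u ∈ H.verts, ∃ w ∈ H.verts, u ≠ v ∧ w ≠ v ∧
    Reachable G H u w ∧ ¬ Reachable G (H.deleteVertex v) u w

/-- `(2,m,l)`-sparsity of the subgraph `K`. -/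
def Sparse (G : GainedGraph V E Γ) (m l : ℤ) (K : Subgraph G) : Prop :=
  ∀ H : Subgraph G, H ≤ K → H.edges.Nonempty →
    (H.edges.card : ℤ) ≤ 2 * (H.freeVerts.card : ℤ) + m * (H.fixedVerts.card : ℤ) - l

/-- `(2,m,l)`-tightness of the subgraph `K`. -/
def Tight (G : GainedGraph V E Γ) (m l : ℤ) (K : Subgraph G) : Prop :=
  Sparse G m l K ∧
    (K.edges.card : ℤ) = 2 * (K.freeVerts.card : ℤ) + m * (K.fixedVerts.card : ℤ) - l

/-- `(2,m,3,l)`-gain-tightness: `(2,m,l)`-tight and every balanced subgraph with a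
nonempty edge set is `(2,3)`-sparse. -/
def GainTight23 (G : GainedGraph V E Γ) (m l : ℤ) (K : Subgraph G) : Prop :=
  Tight G m l K ∧ ∀ H : Subgraph G, H ≤ K → H.edges.Nonempty → Balanced G H →
    (H.edges.card : ℤ) ≤ 2 * (H.verts.card : ℤ) - 3

/-- The subgraph has no fixed vertex. -/
def NoFixed (G : GainedGraph V E Γ) (H : Subgraph G) : Prop :=
  ∀ x ∈ H.verts, x ∉ G.fixed

/-- Near-balanced with base vertex `v` and gain `δ`: unbalanced, and every closed
walk starting at `v` not containing `v` as an internal vertex has gain `1`, `δ` or `δ⁻¹`. -/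
def NearBalancedAt (G : GainedGraph V E Γ) (H : Subgraph G) (v : V) (δ : Γ) : Prop :=
  ¬ Balanced G H ∧ ∀ L, IsWalk G H L v v →
    (∀ x ∈ (L.map (stepEnd G)).dropLast, x ≠ v) → walkGain G L ∈ ({1, δ, δ⁻¹} : Set Γ)

def NearBalanced (G : GainedGraph V E Γ) (H : Subgraph G) : Prop :=
  NoFixed G H ∧ ∃ v ∈ H.verts, ∃ δ : Γ, NearBalancedAt G H v δ

/-- The gain group of `H` is isomorphic to `ℤ_n`. -/
def IsZIso (G : GainedGraph V E Γ) (H : Subgraph G) (n : ℕ) : Prop :=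
  Nonempty (gainGroup G H ≃* Multiplicative (ZMod n))

def ProperNearBalanced (G : GainedGraph V E Γ) (H : Subgraph G) : Prop :=
  NearBalanced G H ∧ ¬ IsZIso G H 2 ∧ ¬ IsZIso G H 3

/-- The set `S_i(k,j)`. -/
def SSet (k j : ℕ) (i : ℤ) : Set ℕ :=
  {n | 2 ≤ n ∧ n ∣ k ∧ (Odd j → n ≠ 2) ∧ ((j : ZMod n) = (i : ZMod n))}

/-- `H` is `S_i(k,j)`. -/
def IsS (G : GainedGraph V E Γ) (k j : ℕ) (i : ℤ) (H : Subgraph G) : Prop :=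
  ∃ n ∈ SSet k j i, IsZIso G H n

/-- `H` is `S_{±1}(k,j)`. -/
def IsSpm (G : GainedGraph V E Γ) (k j : ℕ) (H : Subgraph G) : Prop :=
  IsS G k j (-1) H ∨ IsS G k j 1 H

/-- The function `α_k^j` on (connected) subgraphs. -/
noncomputable def alpha (G : GainedGraph V E Γ) (k j : ℕ) (X : Subgraph G) : ℤ :=
  if Balanced G X then 0
  else if Odd j ∧ IsZIso G X 2 then 1
  else if IsSpm G k j X then 2 - (X.fixedVerts.card : ℤ)
  else if IsS G k j 0 X ∨ (X.fixedVerts.card = 0 ∧ ProperNearBalanced G X) then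
    2 - 2 * (X.fixedVerts.card : ℤ)
  else 3 - 2 * (X.fixedVerts.card : ℤ)

/-- The subgraph spanned by a set of edges. -/
def edgeSpan (G : GainedGraph V E Γ) (F : Finset E) : Subgraph G where
  verts := F.image G.tail ∪ F.image G.head
  edges := F
  tail_mem e he := Finset.mem_union_left _ (Finset.mem_image_of_mem _ he)
  head_mem e he := Finset.mem_union_right _ (Finset.mem_image_of_mem _ he)

/-- The connected component of the edge `e` in the subgraph spanned by `F`. -/
noncomputable def componentOf (G : GainedGraph V E Γ) (F : Finset E) (e : E) : Subgraph G :=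
  edgeSpan G (F.filter fun f => Reachable G (edgeSpan G F) (G.tail e) (G.tail f))

/-- The connected components of the edge set `F`. -/
noncomputable def components (G : GainedGraph V E Γ) (F : Finset E) : Finset (Subgraph G) :=
  F.image (componentOf G F)

/-- The count `f_k^j(F) = Σ_{X ∈ C(F)} (2|V(X)| − 3 + α_k^j(X))`. -/
noncomputable def fCount (G : GainedGraph V E Γ) (k j : ℕ) (F : Finset E) : ℤ :=
  ∑ X ∈ components G F, (2 * (X.verts.card : ℤ) - 3 + alpha G k j X)

/-- `ℤ_k^j`-gain sparsity. -/
def GainSparseKJ (G : GainedGraph V E Γ) (k j : ℕ) (K : Subgraph G) : Prop :=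
  ∀ H : Subgraph G, H ≤ K → H.edges.Nonempty → (H.edges.card : ℤ) ≤ fCount G k j H.edges

/-- `ℤ_k^j`-gain tightness. -/
def GainTightKJ (G : GainedGraph V E Γ) (k j : ℕ) (K : Subgraph G) : Prop :=
  GainSparseKJ G k j K ∧ (K.edges.card : ℤ) = fCount G k j K.edges

/-- The degree of a vertex in a subgraph (a loop counts twice). -/
def degree (G : GainedGraph V E Γ) (K : Subgraph G) (v : V) : ℕ :=
  (K.edges.filter fun e => G.tail e = v).card + (K.edges.filter fun e => G.head e = v).card

def HasLoopAt (G : GainedGraph V E Γ) (K : Subgraph G) (v : V) : Prop :=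
  ∃ e ∈ K.edges, G.tail e = v ∧ G.head e = v

/-- The neighbours of a vertex in a subgraph. -/
def neighbors (G : GainedGraph V E Γ) (K : Subgraph G) (v : V) : Finset V :=
  ((K.edges.filter fun e => G.tail e = v).image G.head) ∪
    ((K.edges.filter fun e => G.head e = v).image G.tail)

/-- The subgraph `K` satisfies the axioms of a `Γ`-gain graph. -/
structure IsGainGraphOn (G : GainedGraph V E Γ) (K : Subgraph G) : Prop where
  fixed_card : K.fixedVerts.card ≤ 1
  same_dir : ∀ e ∈ K.edges, ∀ f ∈ K.edges, e ≠ f → G.tail e = G.tail f →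
    G.head e = G.head f → G.gain e ≠ G.gain f
  opp_dir : ∀ e ∈ K.edges, ∀ f ∈ K.edges, e ≠ f → G.tail e = G.head f →
    G.head e = G.tail f → G.gain e ≠ (G.gain f)⁻¹
  fixed_not_loop : ∀ e ∈ K.edges, G.tail e = G.head e → G.tail e ∉ G.fixed
  fixed_not_parallel : ∀ e ∈ K.edges, ∀ f ∈ K.edges, e ≠ f →
    (G.tail e ∈ G.fixed ∨ G.head e ∈ G.fixed) →
    ({G.tail e, G.head e} : Finset V) ≠ {G.tail f, G.head f}
  loop_gain : ∀ e ∈ K.edges, G.tail e = G.head e → G.gain e ≠ 1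

/-- `H` together with the vertex `v` and all edges of `G₀` incident to `v`. -/
def addVertexEdges (G : GainedGraph V E Γ) (G₀ H : Subgraph G) (v : V) : Subgraph G where
  verts := (H.verts ∪ {v}) ∪
    ((G₀.edges.filter fun e => G.tail e = v ∨ G.head e = v).image G.tail ∪
      (G₀.edges.filter fun e => G.tail e = v ∨ G.head e = v).image G.head)
  edges := H.edges ∪ G₀.edges.filter fun e => G.tail e = v ∨ G.head e = v
  tail_mem e he := by
    rcases Finset.mem_union.1 he with h | h
    · exact Finset.mem_union_left _ (Finset.mem_union_left _ (H.tail_mem e h))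
    · exact Finset.mem_union_right _ (Finset.mem_union_left _ (Finset.mem_image_of_mem _ h))
  head_mem e he := by
    rcases Finset.mem_union.1 he with h | h
    · exact Finset.mem_union_left _ (Finset.mem_union_left _ (H.head_mem e h))
    · exact Finset.mem_union_right _ (Finset.mem_union_right _ (Finset.mem_image_of_mem _ h))

/-- The result of a 1-reduction at `v` adding the edge `f`: delete `v` and all edges at
`v` and add the edge `f`. -/
def reduceAt (G : GainedGraph V E Γ) (G₀ : Subgraph G) (v : V) (f : E) : Subgraph G where
  verts := insert (G.tail f) (insert (G.head f) (G₀.verts.erase v))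
  edges := insert f (G₀.edges.filter fun e => G.tail e ≠ v ∧ G.head e ≠ v)
  tail_mem e he := by
    rcases Finset.mem_insert.1 he with rfl | h
    · exact Finset.mem_insert_self _ _
    · rcases Finset.mem_filter.1 h with ⟨h1, h2, h3⟩
      exact Finset.mem_insert_of_mem
        (Finset.mem_insert_of_mem (Finset.mem_erase.2 ⟨h2, G₀.tail_mem e h1⟩))
  head_mem e he := by
    rcases Finset.mem_insert.1 he with rfl | h
    · exact Finset.mem_insert_of_mem (Finset.mem_insert_self _ _)
    · rcases Finset.mem_filter.1 h with ⟨h1, h2, h3⟩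
      exact Finset.mem_insert_of_mem
        (Finset.mem_insert_of_mem (Finset.mem_erase.2 ⟨h3, G₀.head_mem e h1⟩))

/-- The new edge `f` arises from a 1-reduction at the vertex `v` of `G₀`: its endpoints are
joined to `v` by two distinct edges of `G₀` and its gain is the gain of the corresponding
path of length two through `v`. -/
def IsOneReduction (G : GainedGraph V E Γ) (G₀ : Subgraph G) (v : V) (f : E) : Prop :=
  f ∉ G₀.edges ∧ G.tail f ≠ v ∧ G.head f ≠ v ∧
    ∃ s₁ s₂ : E × Bool, s₁.1 ∈ G₀.edges ∧ s₂.1 ∈ G₀.edges ∧ s₁.1 ≠ s₂.1 ∧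
      stepEnd G s₁ = v ∧ stepStart G s₂ = v ∧
      G.tail f = stepStart G s₁ ∧ G.head f = stepEnd G s₂ ∧
      G.gain f = stepGain G s₁ * stepGain G s₂

/-- Two labelled edges coincide (up to reorientation with gain inversion). -/
def SameEdge (G : GainedGraph V E Γ) (e f : E) : Prop :=
  (G.tail e = G.tail f ∧ G.head e = G.head f ∧ G.gain e = G.gain f) ∨
    (G.tail e = G.head f ∧ G.head e = G.tail f ∧ G.gain e = (G.gain f)⁻¹)

/-- `H` is a blocker of the 1-reduction at `v` adding the edge `f`. -/
def IsBlocker (G : GainedGraph V E Γ) (k j : ℕ) (G₀ : Subgraph G) (v : V) (f : E)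
    (H : Subgraph G) : Prop :=
  H ≤ G₀ ∧ v ∉ H.verts ∧ G.tail f ∈ H.verts ∧ G.head f ∈ H.verts ∧ H.edges.Nonempty ∧
    Connected G (H.addEdge f) ∧
    (H.edges.card : ℤ) = 2 * (H.verts.card : ℤ) - 3 + alpha G k j (H.addEdge f)

/-- The graph `G` extended by one fresh edge `none` with tail `t`, head `h` and gain `g`. -/
def extendGraph (G : GainedGraph V E Γ) (t h : V) (g : Γ) : GainedGraph V (Option E) Γ where
  tail e := e.elim t G.tail
  head e := e.elim h G.head
  gain e := e.elim g G.gain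
  fixed := G.fixed

/-- The whole original graph `G`, viewed inside the extension. -/
def extendTop (G : GainedGraph V E Γ) (t h : V) (g : Γ) : Subgraph (extendGraph G t h g) where
  verts := Finset.univ
  edges := Finset.univ.image Option.some
  tail_mem _ _ := Finset.mem_univ _
  head_mem _ _ := Finset.mem_univ _

/-- There is an admissible 1-reduction at `v`, i.e. a choice of new edge (with
endpoints and gain coming from a path of length two through `v`) such that the
resulting `Γ`-gain graph is well defined and `ℤ_k^j`-gain tight. -/
def AdmissibleOneReductionExists (G : GainedGraph V E Γ) (k j : ℕ) (v : V) : Prop :=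
  ∃ t h : V, ∃ g : Γ,
    IsOneReduction (extendGraph G t h g) (extendTop G t h g) v none ∧
    IsGainGraphOn (extendGraph G t h g)
      (reduceAt (extendGraph G t h g) (extendTop G t h g) v none) ∧
    GainTightKJ (extendGraph G t h g) k j
      (reduceAt (extendGraph G t h g) (extendTop G t h g) v none)

end GR

namespace GR

section WalkLemmas

variable {V E Γ : Type} [DecidableEq V] [DecidableEq E] [Fintype V] [Fintype E] [Group Γ]
variable {G : GainedGraph V E Γ}

lemma stepStart_mem {H : Subgraph G} {s : E × Bool} (hs : s.1 ∈ H.edges) :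
    stepStart G s ∈ H.verts := by
  unfold stepStart
  split
  · exact H.tail_mem _ hs
  · exact H.head_mem _ hs

lemma stepEnd_mem {H : Subgraph G} {s : E × Bool} (hs : s.1 ∈ H.edges) :
    stepEnd G s ∈ H.verts := by
  unfold stepEnd
  split
  · exact H.head_mem _ hs
  · exact H.tail_mem _ hs

lemma isWalk_mono {H K : Subgraph G} (hv : H.verts ⊆ K.verts) (he : H.edges ⊆ K.edges) :
    ∀ {L : List (E × Bool)} {u w : V}, IsWalk G H L u w → IsWalk G K L u w
  | [], _, _, ⟨h1, h2⟩ => ⟨h1, hv h2⟩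
  | _ :: _, _, _, ⟨h1, h2, h3⟩ => ⟨he h1, h2, isWalk_mono hv he h3⟩

lemma isWalk_start_mem {H : Subgraph G} :
    ∀ {L : List (E × Bool)} {u w : V}, IsWalk G H L u w → u ∈ H.verts
  | [], _, _, ⟨_, h2⟩ => h2
  | _ :: _, _, _, ⟨h1, h2, _⟩ => h2 ▸ stepStart_mem h1

lemma isWalk_end_mem {H : Subgraph G} :
    ∀ {L : List (E × Bool)} {u w : V}, IsWalk G H L u w → w ∈ H.verts
  | [], _, _, ⟨h1, h2⟩ => h1 ▸ h2
  | _ :: _, _, _, ⟨_, _, h3⟩ => isWalk_end_mem h3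

lemma mem_walkVerts_cons {u x : V} {s : E × Bool} {L : List (E × Bool)} :
    x ∈ walkVerts G u (s :: L) ↔ x = u ∨ x ∈ walkVerts G (stepEnd G s) L := by
  simp [walkVerts]

lemma self_mem_walkVerts {u : V} {L : List (E × Bool)} : u ∈ walkVerts G u L := by
  simp [walkVerts]

lemma walkVerts_subset {H : Subgraph G} :
    ∀ {L : List (E × Bool)} {u w : V}, IsWalk G H L u w →
      ∀ x ∈ walkVerts G u L, x ∈ H.verts
  | [], u, w, ⟨_, h2⟩, x, hx => by
      simp only [walkVerts, List.map_nil, List.mem_singleton] at hx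
      exact hx ▸ h2
  | s :: L, u, w, ⟨h1, h2, h3⟩, x, hx => by
      rcases mem_walkVerts_cons.mp hx with rfl | hx
      · exact h2 ▸ stepStart_mem h1
      · exact walkVerts_subset h3 x hx

lemma end_mem_walkVerts {H : Subgraph G} :
    ∀ {L : List (E × Bool)} {u w : V}, IsWalk G H L u w → w ∈ walkVerts G u L
  | [], _, _, ⟨h1, _⟩ => by subst h1; simp [walkVerts]
  | _ :: _, _, _, ⟨_, _, h3⟩ => mem_walkVerts_cons.mpr (Or.inr (end_mem_walkVerts h3))

lemma isWalk_append {H : Subgraph G} :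
    ∀ {A B : List (E × Bool)} {u x w : V},
      IsWalk G H A u x → IsWalk G H B x w → IsWalk G H (A ++ B) u w
  | [], _, _, _, _, ⟨h1, _⟩, hB => by subst h1; exact hB
  | _ :: _, _, _, _, _, ⟨h1, h2, h3⟩, hB => ⟨h1, h2, isWalk_append h3 hB⟩

lemma isWalk_append_split {H : Subgraph G} :
    ∀ {A B : List (E × Bool)} {u w : V},
      IsWalk G H (A ++ B) u w → ∃ x, IsWalk G H A u x ∧ IsWalk G H B x w
  | [], _, u, _, h => ⟨u, ⟨rfl, isWalk_start_mem h⟩, h⟩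
  | _ :: _, _, _, _, ⟨h1, h2, h3⟩ => by
      obtain ⟨x, hA, hB⟩ := isWalk_append_split h3
      exact ⟨x, ⟨h1, h2, hA⟩, hB⟩

lemma walkGain_nil : walkGain G ([] : List (E × Bool)) = 1 := rfl

lemma walkGain_append (A B : List (E × Bool)) :
    walkGain G (A ++ B) = walkGain G A * walkGain G B := by
  simp [walkGain]

lemma walkVerts_append (u : V) (A B : List (E × Bool)) :
    walkVerts G u (A ++ B) = walkVerts G u A ++ B.map (stepEnd G) := by
  simp [walkVerts]

/-- The reverse of a walk: reverse the list and flip each orientation. -/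
def revWalk (L : List (E × Bool)) : List (E × Bool) :=
  (L.map fun s => (s.1, !s.2)).reverse

lemma stepStart_flip (s : E × Bool) : stepStart G (s.1, !s.2) = stepEnd G s := by
  obtain ⟨e, b⟩ := s; cases b <;> simp [stepStart, stepEnd]

lemma stepEnd_flip (s : E × Bool) : stepEnd G (s.1, !s.2) = stepStart G s := by
  obtain ⟨e, b⟩ := s; cases b <;> simp [stepStart, stepEnd]

lemma stepGain_flip (s : E × Bool) : stepGain G (s.1, !s.2) = (stepGain G s)⁻¹ := by
  obtain ⟨e, b⟩ := s; cases b <;> simp [stepGain]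

lemma isWalk_revWalk {H : Subgraph G} :
    ∀ {L : List (E × Bool)} {u w : V}, IsWalk G H L u w → IsWalk G H (revWalk L) w u
  | [], _, _, ⟨h1, h2⟩ => ⟨h1.symm, h1 ▸ h2⟩
  | s :: L, u, w, ⟨h1, h2, h3⟩ => by
      have h4 : IsWalk G H [(s.1, !s.2)] (stepEnd G s) u := by
        refine ⟨h1, stepStart_flip s, ?_⟩
        rw [stepEnd_flip]
        exact ⟨h2, stepStart_mem h1⟩
      have hrw : revWalk (s :: L) = revWalk L ++ [(s.1, !s.2)] := by simp [revWalk]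
      rw [hrw]
      exact isWalk_append (isWalk_revWalk h3) h4

lemma walkGain_revWalk (L : List (E × Bool)) :
    walkGain G (revWalk L) = (walkGain G L)⁻¹ := by
  rw [walkGain, revWalk, List.map_reverse, List.map_map]
  rw [show (stepGain G ∘ fun s : E × Bool => (s.1, !s.2))
      = (fun g : Γ => g⁻¹) ∘ stepGain G from funext fun s => stepGain_flip s]
  rw [← List.map_map, ← List.prod_inv_reverse]
  rfl

lemma mem_map_stepStart {H : Subgraph G} :
    ∀ {L : List (E × Bool)} {u w x : V}, IsWalk G H L u w →
      x ∈ L.map (stepStart G) → x ∈ walkVerts G u L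
  | [], _, _, _, _, hx => by simp at hx
  | s :: L, u, w, x, ⟨h1, h2, h3⟩, hx => by
      rw [List.map_cons, List.mem_cons] at hx
      rcases hx with rfl | hx
      · exact mem_walkVerts_cons.mpr (Or.inl h2)
      · exact mem_walkVerts_cons.mpr (Or.inr (mem_map_stepStart h3 hx))

lemma mem_walkVerts_revWalk {H : Subgraph G} {L : List (E × Bool)} {u w x : V}
    (h : IsWalk G H L u w) (hx : x ∈ walkVerts G w (revWalk L)) :
    x ∈ walkVerts G u L := by
  simp only [walkVerts, List.mem_cons] at hx
  rcases hx with rfl | hx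
  · exact end_mem_walkVerts h
  · have hmap : (revWalk L).map (stepEnd G) = (L.map (stepStart G)).reverse := by
      rw [revWalk, List.map_reverse, List.map_map]
      congr 1
      exact List.map_congr_left fun s _ => stepEnd_flip s
    rw [hmap, List.mem_reverse] at hx
    exact mem_map_stepStart h hx

lemma isWalk_restrict {H K : Subgraph G} :
    ∀ {L : List (E × Bool)} {u w : V}, IsWalk G K L u w →
      (∀ s ∈ L, s.1 ∈ H.edges) → u ∈ H.verts → IsWalk G H L u w
  | [], _, _, ⟨h1, _⟩, _, hu => ⟨h1, hu⟩
  | s :: L, _, _, ⟨_, h2, h3⟩, he, _ =>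
      ⟨he s (List.mem_cons_self), h2,
        isWalk_restrict h3 (fun t ht => he t (List.mem_cons_of_mem s ht))
          (stepEnd_mem (he s (List.mem_cons_self)))⟩

lemma gainGroup_mono {H K : Subgraph G} (hv : H.verts ⊆ K.verts)
    (he : H.edges ⊆ K.edges) : gainGroup G H ≤ gainGroup G K := by
  apply Subgroup.closure_mono
  rintro g ⟨u, L, hw, hf, rfl⟩
  exact ⟨u, L, isWalk_mono hv he hw, hf, rfl⟩

lemma walkGain_mem_gainGroup {H : Subgraph G} {L : List (E × Bool)} {u : V}
    (h : IsWalk G H L u u) (hf : ∀ x ∈ walkVerts G u L, x ∉ G.fixed) :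
    walkGain G L ∈ gainGroup G H :=
  Subgroup.subset_closure ⟨u, L, h, hf, rfl⟩

/-- In a connected subgraph with no fixed cut-vertex (and at most one fixed vertex in the
whole graph), any two non-fixed vertices are joined by a walk avoiding all fixed vertices. -/
lemma connect_avoiding {H : Subgraph G} (hc : Connected G H)
    (hcut : ∀ v ∈ G.fixed, ¬ IsCutVertex G H v) (hcard : G.fixed.card ≤ 1)
    {u w : V} (hu : u ∈ H.verts) (hw : w ∈ H.verts)
    (hu' : u ∉ G.fixed) (hw' : w ∉ G.fixed) :
    ∃ M, IsWalk G H M u w ∧ ∀ x ∈ walkVerts G u M, x ∉ G.fixed := by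
  obtain ⟨M₀, hM₀⟩ := hc.2 u hu w hw
  by_cases hex : ∃ v ∈ G.fixed, v ∈ H.verts
  · obtain ⟨v, hvf, hvH⟩ := hex
    have hfix : ∀ y ∈ G.fixed, y = v := fun y hy =>
      Finset.card_le_one.mp hcard y hy v hvf
    have huv : u ≠ v := fun h => hu' (h ▸ hvf)
    have hwv : w ≠ v := fun h => hw' (h ▸ hvf)
    have hreach : Reachable G (H.deleteVertex v) u w := by
      by_contra hcon
      exact hcut v hvf ⟨hvH, u, hu, w, hw, huv, hwv, ⟨M₀, hM₀⟩, hcon⟩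
    obtain ⟨M, hM⟩ := hreach
    refine ⟨M, isWalk_mono (Finset.erase_subset _ _) (Finset.filter_subset _ _) hM, ?_⟩
    intro x hx hxf
    have hxv := walkVerts_subset hM x hx
    exact (Finset.mem_erase.mp hxv).1 (hfix x hxf)
  · push_neg at hex
    exact ⟨M₀, hM₀, fun x hx hxf => hex x hxf (walkVerts_subset hM₀ x hx)⟩

/-- A walk lying in a subgraph `C` containing the "intersection" subgraph `I`, between two
vertices of `I`, can be replaced by a walk in `I` at the cost of an element of `⟨C⟩`. -/
lemma segment_decomp {I C : Subgraph G}
    (hIC_v : I.verts ⊆ C.verts) (hIC_e : I.edges ⊆ C.edges)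
    (hc : Connected G I) (hcut : ∀ v ∈ G.fixed, ¬ IsCutVertex G I v)
    (hcard : G.fixed.card ≤ 1)
    {P : List (E × Bool)} {u w : V} (hP : IsWalk G C P u w)
    (hf : ∀ x ∈ walkVerts G u P, x ∉ G.fixed)
    (hu : u ∈ I.verts) (hw : w ∈ I.verts) :
    ∃ M, IsWalk G I M u w ∧ (∀ x ∈ walkVerts G u M, x ∉ G.fixed) ∧
      walkGain G P * (walkGain G M)⁻¹ ∈ gainGroup G C := by
  have hu' : u ∉ G.fixed := hf u self_mem_walkVerts
  have hw' : w ∉ G.fixed := hf w (end_mem_walkVerts hP)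
  obtain ⟨M, hM, hMf⟩ := connect_avoiding hc hcut hcard hu hw hu' hw'
  refine ⟨M, hM, hMf, ?_⟩
  have hrev : IsWalk G I (revWalk M) w u := isWalk_revWalk hM
  have hclosed : IsWalk G C (P ++ revWalk M) u u :=
    isWalk_append hP (isWalk_mono hIC_v hIC_e hrev)
  have hfix2 : ∀ x ∈ walkVerts G u (P ++ revWalk M), x ∉ G.fixed := by
    intro x hx
    rw [walkVerts_append, List.mem_append] at hx
    rcases hx with hx | hx
    · exact hf x hx
    · refine hMf x (mem_walkVerts_revWalk hM ?_)
      simp only [walkVerts, List.mem_cons]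
      exact Or.inr hx
  have hmem := walkGain_mem_gainGroup hclosed hfix2
  rwa [walkGain_append, walkGain_revWalk] at hmem

lemma dropWhile_head_not (p : E × Bool → Bool) :
    ∀ (l : List (E × Bool)) {t : E × Bool} {Q : List (E × Bool)},
      l.dropWhile p = t :: Q → p t = false
  | [], t, Q, h => by simp [List.dropWhile] at h
  | a :: l, t, Q, h => by
      rw [List.dropWhile_cons] at h
      by_cases hp : p a = true
      · rw [if_pos hp] at h
        exact dropWhile_head_not p l h
      · rw [if_neg hp] at h
        cases h
        simpa using hp

end WalkLemmas

section CommLemmas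

variable {V E Γ : Type} [DecidableEq V] [DecidableEq E] [Fintype V] [Fintype E] [CommGroup Γ]
variable {G : GainedGraph V E Γ}

/-- Key decomposition: a fixed-vertex-avoiding walk in `H₁ ∪ H₂` between two vertices of
`H₁ ∩ H₂` equals (up to `⟨H₁⟩ ⊔ ⟨H₂⟩`) a fixed-vertex-avoiding walk in `H₁ ∩ H₂`. -/
lemma union_walk_decomp {H₁ H₂ : Subgraph G} (hc : Connected G (H₁.inter H₂))
    (hcut : ∀ v ∈ G.fixed, ¬ IsCutVertex G (H₁.inter H₂) v) (hcard : G.fixed.card ≤ 1) :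
    ∀ (n : ℕ) (L : List (E × Bool)) (u w : V), L.length ≤ n →
      IsWalk G (H₁.union H₂) L u w →
      (∀ x ∈ walkVerts G u L, x ∉ G.fixed) →
      u ∈ (H₁.inter H₂).verts → w ∈ (H₁.inter H₂).verts →
      ∃ M, IsWalk G (H₁.inter H₂) M u w ∧ (∀ x ∈ walkVerts G u M, x ∉ G.fixed) ∧
        walkGain G L * (walkGain G M)⁻¹ ∈ gainGroup G H₁ ⊔ gainGroup G H₂ := by
  intro n
  induction n with
  | zero =>
    intro L u w hlen hL hf hu hw
    have hnil : L = [] := List.length_eq_zero_iff.mp (Nat.le_zero.mp hlen)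
    subst hnil
    refine ⟨[], ⟨hL.1, hu⟩, hf, by rw [walkGain_nil]; simpa using one_mem _⟩
  | succ n ih =>
    intro L u w hlen hL hf hu hw
    match L, hL with
    | [], hL =>
      refine ⟨[], ⟨hL.1, hu⟩, hf, by rw [walkGain_nil]; simpa using one_mem _⟩
    | s :: L', hL =>
      have hs' : s.1 ∈ H₁.edges ∨ s.1 ∈ H₂.edges := Finset.mem_union.mp hL.1
      have key : ∀ C D : Subgraph G,
          (H₁.inter H₂).verts ⊆ C.verts → (H₁.inter H₂).edges ⊆ C.edges →
          (∀ e ∈ (H₁.union H₂).edges, e ∉ C.edges → e ∈ D.edges) →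
          (∀ x, x ∈ C.verts → x ∈ D.verts → x ∈ (H₁.inter H₂).verts) →
          gainGroup G C ≤ gainGroup G H₁ ⊔ gainGroup G H₂ →
          s.1 ∈ C.edges →
          ∃ M, IsWalk G (H₁.inter H₂) M u w ∧ (∀ x ∈ walkVerts G u M, x ∉ G.fixed) ∧
            walkGain G (s :: L') * (walkGain G M)⁻¹ ∈ gainGroup G H₁ ⊔ gainGroup G H₂ := by
        intro C D hICv hICe hUC hCDv hCle hsC
        obtain ⟨P, Q, hPQ, hPne, hPall, hQprop⟩ :
            ∃ P Q : List (E × Bool), P ++ Q = s :: L' ∧ P ≠ [] ∧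
              (∀ t ∈ P, t.1 ∈ C.edges) ∧
              (Q = [] ∨ ∃ t Q', Q = t :: Q' ∧ t.1 ∉ C.edges) := by
          refine ⟨(s :: L').takeWhile (fun t => decide (t.1 ∈ C.edges)),
            (s :: L').dropWhile (fun t => decide (t.1 ∈ C.edges)),
            List.takeWhile_append_dropWhile, ?_, ?_, ?_⟩
          · rw [List.takeWhile_cons_of_pos (by simpa using hsC)]
            simp
          · intro t ht
            have := List.mem_takeWhile_imp ht
            simpa using this
          · rcases hE : (s :: L').dropWhile (fun t => decide (t.1 ∈ C.edges))
              with _ | ⟨t, Q'⟩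
            · exact Or.inl hE
            · refine Or.inr ⟨t, Q', hE, ?_⟩
              have := dropWhile_head_not (fun t => decide (t.1 ∈ C.edges)) (s :: L') hE
              simpa using this
        rw [← hPQ] at hL hf ⊢
        obtain ⟨x, hP, hQw⟩ := isWalk_append_split hL
        have hfP : ∀ y ∈ walkVerts G u P, y ∉ G.fixed := by
          intro y hy
          exact hf y (by rw [walkVerts_append]; exact List.mem_append_left _ hy)
        have hPC : IsWalk G C P u x := isWalk_restrict hP hPall (hICv hu)
        rcases hQprop with rfl | ⟨t, Q', rfl, htn⟩
        · obtain ⟨rfl, -⟩ := hQw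
          obtain ⟨M, hM, hMf, hmem⟩ :=
            segment_decomp hICv hICe hc hcut hcard hPC hfP hu hw
          refine ⟨M, hM, hMf, ?_⟩
          rw [List.append_nil]
          exact hCle hmem
        · have htD : t.1 ∈ D.edges := hUC t.1 hQw.1 htn
          have hxC : x ∈ C.verts := isWalk_end_mem hPC
          have hxD : x ∈ D.verts := hQw.2.1 ▸ stepStart_mem htD
          have hxI : x ∈ (H₁.inter H₂).verts := hCDv x hxC hxD
          have hxf : x ∉ G.fixed := by
            refine hf x ?_
            rw [walkVerts_append]
            exact List.mem_append_left _ (end_mem_walkVerts hP)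
          obtain ⟨M₁, hM₁, hM₁f, hg₁⟩ :=
            segment_decomp hICv hICe hc hcut hcard hPC hfP hu hxI
          have hQlen : (t :: Q').length ≤ n := by
            have hlen' : P.length + (t :: Q').length = L'.length + 1 := by
              rw [← List.length_append, hPQ]; rfl
            have hP1 : 1 ≤ P.length := List.length_pos_iff.mpr hPne
            have : L'.length + 1 ≤ n + 1 := hlen
            omega
          have hfQ : ∀ y ∈ walkVerts G x (t :: Q'), y ∉ G.fixed := by
            intro y hy
            simp only [walkVerts, List.mem_cons] at hy
            rcases hy with rfl | hy
            · exact hxf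
            · refine hf y ?_
              rw [walkVerts_append]
              exact List.mem_append_right _ hy
          obtain ⟨M₂, hM₂, hM₂f, hg₂⟩ := ih (t :: Q') x w hQlen hQw hfQ hxI hw
          refine ⟨M₁ ++ M₂, isWalk_append hM₁ hM₂, ?_, ?_⟩
          · intro y hy
            rw [walkVerts_append, List.mem_append] at hy
            rcases hy with hy | hy
            · exact hM₁f y hy
            · refine hM₂f y ?_
              simp only [walkVerts, List.mem_cons]
              exact Or.inr hy
          · have hcalc : walkGain G (P ++ t :: Q') * (walkGain G (M₁ ++ M₂))⁻¹
                = (walkGain G P * (walkGain G M₁)⁻¹)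
                  * (walkGain G (t :: Q') * (walkGain G M₂)⁻¹) := by
              rw [walkGain_append, walkGain_append, mul_inv, mul_mul_mul_comm]
            rw [hcalc]
            exact mul_mem (hCle hg₁) hg₂
      rcases hs' with hsC | hsC
      · exact key H₁ H₂ (Finset.inter_subset_left) (Finset.inter_subset_left)
          (fun e he hn => (Finset.mem_union.mp he).resolve_left hn)
          (fun x h1 h2 => Finset.mem_inter.mpr ⟨h1, h2⟩)
          le_sup_left hsC
      · exact key H₂ H₁ (Finset.inter_subset_right) (Finset.inter_subset_right)
          (fun e he hn => (Finset.mem_union.mp he).resolve_right hn)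
          (fun x h1 h2 => Finset.mem_inter.mpr ⟨h2, h1⟩)
          le_sup_right hsC

/-- The gain of any closed fixed-vertex-avoiding walk in `H₁ ∪ H₂` lies in `⟨H₁⟩ ⊔ ⟨H₂⟩`. -/
lemma union_closed_gain {H₁ H₂ : Subgraph G} (hc : Connected G (H₁.inter H₂))
    (hcut : ∀ v ∈ G.fixed, ¬ IsCutVertex G (H₁.inter H₂) v) (hcard : G.fixed.card ≤ 1)
    {L : List (E × Bool)} {u : V} (hL : IsWalk G (H₁.union H₂) L u u)
    (hf : ∀ x ∈ walkVerts G u L, x ∉ G.fixed) :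
    walkGain G L ∈ gainGroup G H₁ ⊔ gainGroup G H₂ := by
  by_cases h1 : ∀ t ∈ L, t.1 ∈ H₁.edges
  · match L, hL with
    | [], hL => rw [walkGain_nil]; exact one_mem _
    | s :: L', hL =>
      have hu1 : u ∈ H₁.verts := hL.2.1 ▸ stepStart_mem (h1 s (List.mem_cons_self))
      exact Subgroup.mem_sup_left (walkGain_mem_gainGroup (isWalk_restrict hL h1 hu1) hf)
  by_cases h2 : ∀ t ∈ L, t.1 ∈ H₂.edges
  · match L, hL with
    | [], hL => rw [walkGain_nil]; exact one_mem _
    | s :: L', hL =>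
      have hu2 : u ∈ H₂.verts := hL.2.1 ▸ stepStart_mem (h2 s (List.mem_cons_self))
      exact Subgroup.mem_sup_right (walkGain_mem_gainGroup (isWalk_restrict hL h2 hu2) hf)
  push_neg at h1 h2
  obtain ⟨t₁, ht₁L, ht₁⟩ := h1
  obtain ⟨t₂, ht₂L, ht₂⟩ := h2
  match L, hL, hf, ht₁L, ht₂L with
  | s :: L', hL, hf, ht₁L, ht₂L =>
  have key : ∀ C D : Subgraph G,
      (H₁.inter H₂).verts ⊆ C.verts →
      (∀ e ∈ (H₁.union H₂).edges, e ∉ C.edges → e ∈ D.edges) →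
      (∀ x, x ∈ C.verts → x ∈ D.verts → x ∈ (H₁.inter H₂).verts) →
      s.1 ∈ C.edges → (∃ t ∈ s :: L', t.1 ∉ C.edges) →
      walkGain G (s :: L') ∈ gainGroup G H₁ ⊔ gainGroup G H₂ := by
    intro C D hICv hUC hCDv hsC hbad
    have huC : u ∈ C.verts := hL.2.1 ▸ stepStart_mem hsC
    obtain ⟨P, Q, hPQ, hPall, hQprop⟩ :
        ∃ P Q : List (E × Bool), P ++ Q = s :: L' ∧
          (∀ t ∈ P, t.1 ∈ C.edges) ∧
          ∃ t Q', Q = t :: Q' ∧ t.1 ∉ C.edges := by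
      refine ⟨(s :: L').takeWhile (fun t => decide (t.1 ∈ C.edges)),
        (s :: L').dropWhile (fun t => decide (t.1 ∈ C.edges)),
        List.takeWhile_append_dropWhile, ?_, ?_⟩
      · intro t ht
        have := List.mem_takeWhile_imp ht
        simpa using this
      · rcases hE : (s :: L').dropWhile (fun t => decide (t.1 ∈ C.edges))
          with _ | ⟨t, Q'⟩
        · obtain ⟨t, htL, htn⟩ := hbad
          have := List.dropWhile_eq_nil_iff.mp hE t htL
          simp at this
          exact absurd this htn
        · refine ⟨t, Q', hE, ?_⟩
          have := dropWhile_head_not (fun t => decide (t.1 ∈ C.edges)) (s :: L') hE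
          simpa using this
    obtain ⟨t, Q', rfl, htn⟩ := hQprop
    rw [← hPQ] at hL hf ⊢
    obtain ⟨x, hP, hQw⟩ := isWalk_append_split hL
    have hPC : IsWalk G C P u x := isWalk_restrict hP hPall huC
    have htD : t.1 ∈ D.edges := hUC t.1 hQw.1 htn
    have hxC : x ∈ C.verts := isWalk_end_mem hPC
    have hxD : x ∈ D.verts := hQw.2.1 ▸ stepStart_mem htD
    have hxI : x ∈ (H₁.inter H₂).verts := hCDv x hxC hxD
    have hxf : x ∉ G.fixed := by
      refine hf x ?_
      rw [walkVerts_append]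
      exact List.mem_append_left _ (end_mem_walkVerts hP)
    have hrot : IsWalk G (H₁.union H₂) ((t :: Q') ++ P) x x := isWalk_append hQw hP
    have hfrot : ∀ y ∈ walkVerts G x ((t :: Q') ++ P), y ∉ G.fixed := by
      intro y hy
      simp only [walkVerts, List.map_append, List.mem_cons, List.mem_append] at hy
      rcases hy with rfl | hy | hy
      · exact hxf
      · refine hf y ?_
        rw [walkVerts_append, List.mem_append]
        exact Or.inr hy
      · refine hf y ?_
        rw [walkVerts_append, List.mem_append]
        refine Or.inl ?_
        simp only [walkVerts, List.mem_cons]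
        exact Or.inr hy
    obtain ⟨M, hM, hMf, hg⟩ := union_walk_decomp hc hcut hcard
      ((t :: Q') ++ P).length ((t :: Q') ++ P) x x le_rfl hrot hfrot hxI hxI
    have hMg : walkGain G M ∈ gainGroup G H₁ ⊔ gainGroup G H₂ :=
      Subgroup.mem_sup_left (gainGroup_mono (Finset.inter_subset_left)
        (Finset.inter_subset_left) (walkGain_mem_gainGroup hM hMf))
    have hcalc : walkGain G (P ++ t :: Q')
        = walkGain G ((t :: Q') ++ P) * (walkGain G M)⁻¹ * walkGain G M := by
      rw [walkGain_append, walkGain_append, inv_mul_cancel_right]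
      exact mul_comm _ _
    rw [hcalc]
    exact mul_mem hg hMg
  by_cases hsC : s.1 ∈ H₁.edges
  · exact key H₁ H₂ (Finset.inter_subset_left)
      (fun e he hn => (Finset.mem_union.mp he).resolve_left hn)
      (fun x hx1 hx2 => Finset.mem_inter.mpr ⟨hx1, hx2⟩)
      hsC ⟨t₁, ht₁L, ht₁⟩
  · have hsC2 : s.1 ∈ H₂.edges := (Finset.mem_union.mp hL.1).resolve_left hsC
    exact key H₂ H₁ (Finset.inter_subset_right)
      (fun e he hn => (Finset.mem_union.mp he).resolve_right hn)
      (fun x hx1 hx2 => Finset.mem_inter.mpr ⟨hx2, hx1⟩)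
      hsC2 ⟨t₂, ht₂L, ht₂⟩

end CommLemmas

/-- If `H₁, H₂` are connected subgraphs of a `Γ`-gain graph such that
`H₁ ∩ H₂` is connected with no fixed cut-vertex, `⟨H₁⟩ ≅ ℤ_p` for a prime `p`, and
`H₁ ∩ H₂` is unbalanced, then `⟨H₁⟩ ≅ ⟨H₁ ∩ H₂⟩` and `⟨H₂⟩ ≅ ⟨H₁ ∪ H₂⟩`. -/
theorem union_with_prime_gain_group {V E : Type} [DecidableEq V] [DecidableEq E]
    [Fintype V] [Fintype E] (k : ℕ) (hk : 0 < k)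
    (G : GainedGraph V E (Multiplicative (ZMod k)))
    (hG : IsGainGraphOn G (⊤ : Subgraph G))
    (H₁ H₂ : Subgraph G)
    (hc₁ : Connected G H₁) (hc₂ : Connected G H₂)
    (hcI : Connected G (H₁.inter H₂))
    (hcut : ∀ v ∈ G.fixed, ¬ IsCutVertex G (H₁.inter H₂) v)
    (p : ℕ) (hp : p.Prime) (hiso : IsZIso G H₁ p)
    (hunbal : ¬ Balanced G (H₁.inter H₂)) :
    Nonempty (gainGroup G H₁ ≃* gainGroup G (H₁.inter H₂)) ∧
      Nonempty (gainGroup G H₂ ≃* gainGroup G (H₁.union H₂)) := by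
  haveI : NeZero k := ⟨hk.ne'⟩
  haveI : NeZero p := ⟨hp.pos.ne'⟩
  have hcard_fixed : G.fixed.card ≤ 1 := by
    have h := hG.fixed_card
    simpa [Subgraph.fixedVerts, Top.top] using h
  -- ⟨H₁ ∩ H₂⟩ ≤ ⟨H₁⟩ and ⟨H₁ ∩ H₂⟩ ≤ ⟨H₂⟩
  have hmono1 : gainGroup G (H₁.inter H₂) ≤ gainGroup G H₁ :=
    gainGroup_mono Finset.inter_subset_left Finset.inter_subset_left
  have hmono2 : gainGroup G (H₁.inter H₂) ≤ gainGroup G H₂ :=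
    gainGroup_mono Finset.inter_subset_right Finset.inter_subset_right
  -- Part 1: ⟨H₁⟩ = ⟨H₁ ∩ H₂⟩
  obtain ⟨e⟩ := hiso
  have hp1 : Nat.card (gainGroup G H₁) = p := by
    rw [Nat.card_congr e.toEquiv, Nat.card_congr Multiplicative.ofAdd.symm, Nat.card_zmod]
  set S := (gainGroup G (H₁.inter H₂)).subgroupOf (gainGroup G H₁) with hS
  have hSiso := Subgroup.subgroupOfEquivOfLe hmono1
  have hScard : Nat.card S = Nat.card (gainGroup G (H₁.inter H₂)) :=
    Nat.card_congr hSiso.toEquiv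
  have hdvd : Nat.card S ∣ p := hp1 ▸ Subgroup.card_subgroup_dvd_card S
  have hne : Nat.card S ≠ 1 := by
    intro h
    apply hunbal
    have hcard1 : Nat.card (gainGroup G (H₁.inter H₂)) = 1 := by rw [← hScard, h]
    exact Subgroup.card_eq_one.mp hcard1
  have hScardp : Nat.card S = p := ((Nat.Prime.eq_one_or_self_of_dvd hp _ hdvd).resolve_left hne)
  have hStop : S = ⊤ := Subgroup.eq_top_of_card_eq S (by rw [hScardp, hp1])
  have heq1 : gainGroup G H₁ = gainGroup G (H₁.inter H₂) :=
    le_antisymm (Subgroup.subgroupOf_eq_top.mp hStop) hmono1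
  -- Part 2: ⟨H₂⟩ = ⟨H₁ ∪ H₂⟩
  have hsup : gainGroup G H₁ ⊔ gainGroup G H₂ = gainGroup G H₂ :=
    sup_eq_right.mpr (heq1 ▸ hmono2)
  have hle : gainGroup G (H₁.union H₂) ≤ gainGroup G H₂ := by
    rw [gainGroup]
    apply (Subgroup.closure_le _).mpr
    rintro g ⟨u, L, hw, hf, rfl⟩
    have := union_closed_gain hcI hcut hcard_fixed hw hf
    rwa [hsup] at this
  have heq2 : gainGroup G H₂ = gainGroup G (H₁.union H₂) :=
    le_antisymm (gainGroup_mono Finset.subset_union_right Finset.subset_union_right) hle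
  exact ⟨⟨MulEquiv.subgroupCongr heq1⟩, ⟨MulEquiv.subgroupCongr heq2⟩⟩

end GR
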